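/- Let (X,d) be a compact metric space and F = {f₁,…,f_k} a finite family of continuous surjective self-maps of X, with iterates ω_n as below and f = f_k∘f_{k-1}∘⋯∘f₁. Then the non-autonomous system (X,F) is cofinitely sensitive (there exists δ>0 such that for every x∈X and every neighborhood U of x there exists K∈ℕ with diam(ω_n(U)) > δ for all n ≥ K) if and only if the autonomous system (X,f) is cofinitely sensitive (there exists δ>0 such that for every x∈X and every neighborhood U of x there exists K∈ℕ with diam(fⁿ(U)) > δ for all n ≥ K). -/

import Mathlib

open Filter Metric Set Function

/-- The `n`-th iterate `ω_n` of the non-autonomous system generated by the finite family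
`f 0, f 1, …, f k` applied cyclically: `ω_0 = id` and `ω_{n+1} = f (n % (k+1)) ∘ ω_n`,
so that `ω_n = f_{((n-1) mod (k+1)) + 1} ∘ ⋯ ∘ f_2 ∘ f_1` in the paper's (1-based) notation.
The induced autonomous map `f = f_k ∘ ⋯ ∘ f_1` is `omegaIt f (k+1)`. -/
def omegaIt {X : Type*} {k : ℕ} (f : Fin (k + 1) → X → X) : ℕ → X → X
  | 0 => id
  | n + 1 => fun x => f ⟨n % (k + 1), Nat.mod_lt _ (Nat.succ_pos k)⟩ (omegaIt f n x)

lemma omegaIt_cycle {X : Type*} {k : ℕ} (f : Fin (k + 1) → X → X) (a : ℕ) (y : X) :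
    omegaIt f (k + 1 + a) y = omegaIt f a (omegaIt f (k + 1) y) := by
  induction a with
  | zero => rfl
  | succ a ih =>
    show f ⟨(k + 1 + a) % (k + 1), Nat.mod_lt _ (Nat.succ_pos k)⟩ (omegaIt f (k + 1 + a) y)
        = f ⟨a % (k + 1), Nat.mod_lt _ (Nat.succ_pos k)⟩ (omegaIt f a (omegaIt f (k + 1) y))
    rw [ih]
    congr 1
    ext
    simp [Nat.add_mod_left]

lemma omegaIt_mul_add {X : Type*} {k : ℕ} (f : Fin (k + 1) → X → X) (m a : ℕ) (x : X) :
    omegaIt f ((k + 1) * m + a) x = omegaIt f a ((omegaIt f (k + 1))^[m] x) := by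
  induction m generalizing a with
  | zero => simp
  | succ m ih =>
    have h : (k + 1) * (m + 1) + a = (k + 1) * m + (k + 1 + a) := by ring
    rw [h, ih (k + 1 + a), omegaIt_cycle, Function.iterate_succ_apply']

lemma omegaIt_succ_image {X : Type*} {k : ℕ} (f : Fin (k + 1) → X → X) (n : ℕ) (U : Set X) :
    omegaIt f (n + 1) '' U
      = f ⟨n % (k + 1), Nat.mod_lt _ (Nat.succ_pos k)⟩ '' (omegaIt f n '' U) := by
  rw [← Set.image_comp]; rfl

/-- the non-autonomous system `(X, F)` is cofinitely sensitive iff the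
autonomous system `(X, f)`, `f = f_k ∘ ⋯ ∘ f_1`, is cofinitely sensitive. -/
theorem cofinitelySensitive_nonautonomous_iff_autonomous
    {X : Type*} [MetricSpace X] [CompactSpace X] {k : ℕ} (f : Fin (k + 1) → X → X)
    (hc : ∀ i, Continuous (f i)) (hs : ∀ i, Function.Surjective (f i)) :
    (∃ δ > (0 : ℝ), ∀ x : X, ∀ U ∈ nhds x, ∃ K : ℕ, ∀ n ≥ K,
        δ < Metric.diam (omegaIt f n '' U)) ↔
    (∃ δ > (0 : ℝ), ∀ x : X, ∀ U ∈ nhds x, ∃ K : ℕ, ∀ n ≥ K,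
        δ < Metric.diam ((omegaIt f (k + 1))^[n] '' U)) := by
  have hiter : ∀ (m : ℕ) (U : Set X),
      (omegaIt f (k + 1))^[m] '' U = omegaIt f ((k + 1) * m) '' U := by
    intro m U
    have : (omegaIt f (k + 1))^[m] = omegaIt f ((k + 1) * m) := by
      funext x
      have := omegaIt_mul_add f m 0 x
      have h0 : ∀ y, omegaIt f 0 y = y := fun y => rfl
      simpa [h0] using this.symm
    rw [this]
  constructor
  · rintro ⟨δ, hδ, H⟩
    refine ⟨δ, hδ, fun x U hU => ?_⟩
    obtain ⟨K, hK⟩ := H x U hU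
    refine ⟨K, fun n hn => ?_⟩
    rw [hiter]
    exact hK _ (le_trans hn (Nat.le_mul_of_pos_left n (Nat.succ_pos k)))
  · rintro ⟨δ, hδ, H⟩
    -- uniform continuity key
    have key : ∀ ε : ℝ, 0 < ε → ∃ η, 0 < η ∧ ∀ (i : Fin (k + 1)) (A : Set X),
        diam A ≤ η → diam (f i '' A) ≤ ε := by
      intro ε hε
      have huc : ∀ i : Fin (k + 1), ∃ d > 0, ∀ a b : X,
          dist a b < d → dist (f i a) (f i b) < ε := by
        intro i
        have := CompactSpace.uniformContinuous_of_continuous (hc i)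
        rw [Metric.uniformContinuous_iff] at this
        obtain ⟨d, hd, h⟩ := this ε hε
        exact ⟨d, hd, fun a b hab => h hab⟩
      choose d hd hd2 using huc
      have hne : (Finset.univ : Finset (Fin (k + 1))).Nonempty := Finset.univ_nonempty
      set D := Finset.univ.inf' hne d with hD
      have hDpos : 0 < D := by
        rw [hD, Finset.lt_inf'_iff]
        exact fun i _ => hd i
      refine ⟨D / 2, by linarith, fun i A hA => ?_⟩
      apply Metric.diam_le_of_forall_dist_le hε.le
      rintro y ⟨a, ha, rfl⟩ z ⟨b, hb, rfl⟩
      have hab : dist a b ≤ diam A :=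
        Metric.dist_le_diam_of_mem Metric.isBounded_of_compactSpace ha hb
      have : dist a b < d i := by
        have : D ≤ d i := Finset.inf'_le d (Finset.mem_univ i)
        linarith
      exact (hd2 i a b this).le
    choose η hηpos hη using key
    -- the decreasing sequence of sensitivity constants
    set E : ℕ → {r : ℝ // 0 < r} :=
      fun j => Nat.rec ⟨δ, hδ⟩ (fun _ p => ⟨η p.1 p.2, hηpos p.1 p.2⟩) j with hE
    have hE0 : (E 0).1 = δ := rfl
    have step : ∀ (j n : ℕ) (U : Set X),
        (E 0).1 < diam (omegaIt f (n + j) '' U) → (E j).1 < diam (omegaIt f n '' U) := by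
      intro j
      induction j with
      | zero => intro n U h; simpa using h
      | succ j ih =>
        intro n U h
        have h1 : (E j).1 < diam (omegaIt f (n + 1) '' U) := by
          apply ih (n + 1) U
          rwa [show n + 1 + j = n + (j + 1) by ring]
        by_contra hle
        push_neg at hle
        have h2 : diam (f ⟨n % (k + 1), Nat.mod_lt _ (Nat.succ_pos k)⟩ ''
            (omegaIt f n '' U)) ≤ (E j).1 := hη (E j).1 (E j).2 _ _ hle
        rw [omegaIt_succ_image] at h1
        linarith
    -- final δ'
    have hne' : (Finset.range (k + 2)).Nonempty := ⟨0, by simp⟩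
    refine ⟨Finset.inf' (Finset.range (k + 2)) hne' (fun j => (E j).1), ?_, ?_⟩
    · show (0:ℝ) < _
      rw [Finset.lt_inf'_iff]; exact fun j _ => (E j).2
    · intro x U hU
      obtain ⟨K, hK⟩ := H x U hU
      refine ⟨(k + 1) * K, fun n hn => ?_⟩
      set s := (k + 1) - n % (k + 1) with hs'
      have hmod : n % (k + 1) < k + 1 := Nat.mod_lt _ (Nat.succ_pos k)
      have hsle : s ≤ k + 1 := Nat.sub_le _ _
      have hns : n + s = (k + 1) * (n / (k + 1) + 1) := by
        have h1 : (k + 1) * (n / (k + 1)) + n % (k + 1) = n := Nat.div_add_mod n (k + 1)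
        have h2 : (k + 1) * (n / (k + 1) + 1) = (k + 1) * (n / (k + 1)) + (k + 1) := by ring
        omega
      have hm : K ≤ n / (k + 1) + 1 := by
        have : K ≤ n / (k + 1) := (Nat.le_div_iff_mul_le (Nat.succ_pos k)).2 (by linarith [hn]; )
        omega
      have hdiam : (E 0).1 < diam (omegaIt f (n + s) '' U) := by
        rw [hE0, hns, ← hiter]
        exact hK _ hm
      have := step s n U hdiam
      have hle : Finset.inf' (Finset.range (k + 2)) hne' (fun j => (E j).1) ≤ (E s).1 :=
        Finset.inf'_le _ (Finset.mem_range.2 (by omega))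
      linarith
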